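/- Let G=(V,E) be a finite simple undirected graph, let x ∈ V, let A ⊆ V, let T ≥ 0 be an integer, and let λ > 0. Let esc(x,T,A) be the probability that a lazy random walk started from x leaves A within the first T steps. Then the volume-biased evolving set process started from {x} satisfies P̂_x[ max_{0 ≤ t ≤ T} μ(S_t \ A)/μ(S_t) > λ · esc(x,T,A) ] < 1/λ. -/

import Mathlib

open scoped Classical symmDiff

noncomputable section

variable {V : Type*} [Fintype V] [DecidableEq V]

/-- The volume `μ(S)` of a set of vertices: the sum of the degrees. -/
def vol (G : SimpleGraph V) [DecidableRel G.Adj] (S : Finset V) : ℝ :=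
  ∑ x ∈ S, (G.degree x : ℝ)

/-- The number of edges leaving `S`, i.e. `∂(S) = e(S, Sᶜ)`. -/
def bdry (G : SimpleGraph V) [DecidableRel G.Adj] (S : Finset V) : ℝ :=
  ∑ x ∈ S, ((Sᶜ.filter (G.Adj x)).card : ℝ)

/-- The conductance `φ(S) = ∂(S)/μ(S)`. -/
def phiCond (G : SimpleGraph V) [DecidableRel G.Adj] (S : Finset V) : ℝ :=
  bdry G S / vol G S

/-- The lazy random walk kernel `p(x,y)`: `1/2` if `x = y`, `1/(2 d(x))` if `x ~ y`,
and `0` otherwise. -/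
def walkP (G : SimpleGraph V) [DecidableRel G.Adj] (x y : V) : ℝ :=
  if x = y then 1/2 else if G.Adj x y then 1 / (2 * (G.degree x : ℝ)) else 0

/-- `p(x,S) = Σ_{y∈S} p(x,y)`. -/
def pset (G : SimpleGraph V) [DecidableRel G.Adj] (x : V) (S : Finset V) : ℝ :=
  ∑ y ∈ S, walkP G x y

/-- One step of the evolving set process from `S` with threshold `u`:
`S₁ = {y : p(y,S) ≥ u}`. -/
def esStep (G : SimpleGraph V) [DecidableRel G.Adj] (S : Finset V) (u : ℝ) : Finset V :=
  Finset.univ.filter fun y => u ≤ pset G y S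

/-- The ESP transition kernel `K(S,S')`: the probability, for a uniform threshold
`U ∈ [0,1]`, that `{y : p(y,S) ≥ U} = S'`. -/
def Kk (G : SimpleGraph V) [DecidableRel G.Adj] (S S' : Finset V) : ℝ :=
  (MeasureTheory.volume {u : ℝ | u ∈ Set.Icc (0:ℝ) 1 ∧ esStep G S u = S'}).toReal

/-- The volume-biased ESP transition kernel `K̂(S,S') = (μ(S')/μ(S)) K(S,S')`. -/
def Khat (G : SimpleGraph V) [DecidableRel G.Adj] (S S' : Finset V) : ℝ :=
  vol G S' / vol G S * Kk G S S'

/-- `esc(x,T,A)`: the probability that the lazy random walk started from `x`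
leaves `A` within the first `T` steps. -/
def escProb (G : SimpleGraph V) [DecidableRel G.Adj] (x : V) (T : ℕ) (A : Finset V) : ℝ :=
  ∑ v : Fin (T+1) → V,
    if v 0 = x ∧ ∃ j : Fin (T+1), v j ∉ A
    then ∏ j : Fin T, walkP G (v j.castSucc) (v j.succ) else 0

/-- Expectation of `f` over length-`(t+1)` sample paths `(S₀, …, S_t)` of the Markov
chain with transition kernel `κ` started at `S₀`. -/
def Epath (κ : Finset V → Finset V → ℝ) (S₀ : Finset V) (t : ℕ)
    (f : (Fin (t+1) → Finset V) → ℝ) : ℝ :=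
  ∑ w : Fin (t+1) → Finset V,
    if w 0 = S₀ then (∏ j : Fin t, κ (w j.castSucc) (w j.succ)) * f w else 0

set_option linter.unusedSectionVars false
set_option linter.unusedVariables false

section AUX

variable (G : SimpleGraph V) [DecidableRel G.Adj]

lemma vol_nonneg (S : Finset V) : 0 ≤ vol G S :=
  Finset.sum_nonneg fun _ _ => by positivity

lemma degree_le_vol {y : V} {S : Finset V} (hy : y ∈ S) : (G.degree y : ℝ) ≤ vol G S :=
  Finset.single_le_sum (f := fun z => (G.degree z : ℝ)) (fun _ _ => by positivity) hy

lemma walkP_nonneg (y z : V) : 0 ≤ walkP G y z := by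
  unfold walkP; split_ifs <;> positivity

lemma pset_nonneg (y : V) (S : Finset V) : 0 ≤ pset G y S :=
  Finset.sum_nonneg fun _ _ => walkP_nonneg G _ _

lemma walkP_rowsum_eq (y : V) :
    ∑ z, walkP G y z = 1/2 + (G.degree y : ℝ) * (if 0 < G.degree y then 1 / (2 * (G.degree y : ℝ)) else 0) := by
  rw [← Finset.sum_erase_add _ _ (Finset.mem_univ y)]
  have h1 : walkP G y y = 1/2 := by simp [walkP]
  have h2 : ∑ z ∈ Finset.univ.erase y, walkP G y z
      = (G.degree y : ℝ) * (if 0 < G.degree y then 1 / (2 * (G.degree y : ℝ)) else 0) := by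
    have : ∑ z ∈ Finset.univ.erase y, walkP G y z
        = ∑ z ∈ G.neighborFinset y, (1 / (2 * (G.degree y : ℝ))) := by
      rw [Finset.sum_congr rfl (g := fun z => if G.Adj y z then 1 / (2 * (G.degree y : ℝ)) else 0)
          (fun z hz => by
            have hyz : y ≠ z := fun h => (Finset.mem_erase.mp hz).1 h.symm
            simp [walkP, hyz]),
        Finset.sum_ite, Finset.sum_const_zero, add_zero]
      apply Finset.sum_congr _ (fun _ _ => rfl)
      ext z
      simp only [Finset.mem_filter, Finset.mem_erase, Finset.mem_univ, true_and,
        SimpleGraph.mem_neighborFinset, and_iff_right_iff_imp]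
      exact fun h => ⟨fun h' => (G.ne_of_adj h) h'.symm, trivial⟩
    rw [this, Finset.sum_const, SimpleGraph.card_neighborFinset_eq_degree]
    by_cases hd : 0 < G.degree y
    · simp [hd, nsmul_eq_mul]
    · have : G.degree y = 0 := Nat.eq_zero_of_not_pos hd
      simp [this]
  rw [h1, h2]; ring

lemma walkP_rowsum {y : V} (hd : 0 < G.degree y) : ∑ z, walkP G y z = 1 := by
  rw [walkP_rowsum_eq, if_pos hd]
  have h : (G.degree y : ℝ) ≠ 0 := by positivity
  field_simp
  ring

lemma walkP_rowsum_le (y : V) : ∑ z, walkP G y z ≤ 1 := by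
  rw [walkP_rowsum_eq]
  split_ifs with hd
  · have : (G.degree y : ℝ) ≠ 0 := by positivity
    rw [show (G.degree y : ℝ) * (1 / (2 * (G.degree y : ℝ))) = 1/2 by field_simp]
    norm_num
  · norm_num

lemma pset_le_one (y : V) (S : Finset V) : pset G y S ≤ 1 := by
  refine le_trans ?_ (walkP_rowsum_le G y)
  exact Finset.sum_le_sum_of_subset_of_nonneg (Finset.subset_univ S)
    (fun z _ _ => walkP_nonneg G y z)

lemma walkP_rev (y z : V) :
    (G.degree y : ℝ) * walkP G y z = (G.degree z : ℝ) * walkP G z y := by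
  by_cases h : y = z
  · subst h; rfl
  · by_cases ha : G.Adj y z
    · have ha' : G.Adj z y := ha.symm
      have hy : 0 < G.degree y := by
        rw [← SimpleGraph.card_neighborFinset_eq_degree]
        exact Finset.card_pos.mpr ⟨z, (SimpleGraph.mem_neighborFinset G y z).mpr ha⟩
      have hz : 0 < G.degree z := by
        rw [← SimpleGraph.card_neighborFinset_eq_degree]
        exact Finset.card_pos.mpr ⟨y, (SimpleGraph.mem_neighborFinset G z y).mpr ha'⟩
      have hy' : (G.degree y : ℝ) ≠ 0 := by positivity
      have hz' : (G.degree z : ℝ) ≠ 0 := by positivity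
      have h2 : ¬ (z = y) := fun hh => h hh.symm
      simp only [walkP, if_neg h, if_neg h2, if_pos ha, if_pos ha']
      field_simp
    · have ha' : ¬ G.Adj z y := fun hh => ha hh.symm
      have h2 : ¬ (z = y) := fun hh => h hh.symm
      simp [walkP, h, h2, ha, ha']

lemma sum_deg_walkP (S : Finset V) (z : V) :
    ∑ y ∈ S, (G.degree y : ℝ) * walkP G y z = (G.degree z : ℝ) * pset G z S := by
  rw [pset, Finset.mul_sum]
  exact Finset.sum_congr rfl fun y _ => walkP_rev G y z

lemma deg_mul_rowsum (y : V) : (G.degree y : ℝ) * ∑ z, walkP G y z = (G.degree y : ℝ) := by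
  by_cases hd : 0 < G.degree y
  · rw [walkP_rowsum G hd, mul_one]
  · have : G.degree y = 0 := Nat.eq_zero_of_not_pos hd
    simp [this]

open MeasureTheory in
example : True := trivial

section KK
open MeasureTheory Set

variable {V : Type*} [Fintype V] [DecidableEq V]
variable (G : SimpleGraph V) [DecidableRel G.Adj]

def Kset (S S' : Finset V) : Set ℝ := {u : ℝ | u ∈ Set.Icc (0:ℝ) 1 ∧ esStep G S u = S'}

lemma mem_esStep {y : V} {S : Finset V} {u : ℝ} : y ∈ esStep G S u ↔ u ≤ pset G y S := by
  simp [esStep]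

lemma Kset_eq (S S' : Finset V) :
    Kset G S S' = Set.Icc (0:ℝ) 1 ∩ ⋂ y : V, {u : ℝ | y ∈ S' ↔ u ≤ pset G y S} := by
  ext u
  simp only [Kset, Set.mem_setOf_eq, Set.mem_inter_iff, Set.mem_iInter]
  constructor
  · rintro ⟨h1, h2⟩
    exact ⟨h1, fun y => by rw [← h2, mem_esStep]⟩
  · rintro ⟨h1, h2⟩
    refine ⟨h1, ?_⟩
    ext y
    rw [mem_esStep, ← h2]

lemma Kset_measurable (S S' : Finset V) : MeasurableSet (Kset G S S') := by
  rw [Kset_eq]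
  apply MeasurableSet.inter measurableSet_Icc
  apply MeasurableSet.iInter
  intro y
  by_cases hy : y ∈ S'
  · have : {u : ℝ | y ∈ S' ↔ u ≤ pset G y S} = Set.Iic (pset G y S) := by
      ext u; simp [hy]
    rw [this]; exact measurableSet_Iic
  · have : {u : ℝ | y ∈ S' ↔ u ≤ pset G y S} = Set.Ioi (pset G y S) := by
      ext u
      simp only [Set.mem_setOf_eq, Set.mem_Ioi, iff_false_intro hy, false_iff, not_le]
    rw [this]; exact measurableSet_Ioi

lemma Kset_disjoint (S : Finset V) :
    (Set.univ : Set (Finset V)).PairwiseDisjoint (Kset G S) := by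
  intro a _ b _ hab
  apply Set.disjoint_left.mpr
  rintro u ⟨_, h1⟩ ⟨_, h2⟩
  exact hab (h1 ▸ h2 ▸ rfl)

lemma Kset_vol_le_one (S S' : Finset V) : volume (Kset G S S') ≤ 1 := by
  refine le_trans (measure_mono (fun u hu => hu.1)) ?_
  simp [Real.volume_Icc]

lemma Kk_nonneg (S S' : Finset V) : 0 ≤ Kk G S S' := ENNReal.toReal_nonneg

lemma Kk_sum_aux (S : Finset V) (t : Finset (Finset V)) :
    ∑ S' ∈ t, Kk G S S' = (volume (⋃ S' ∈ t, Kset G S S')).toReal := by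
  rw [measure_biUnion_finset ((Kset_disjoint G S).subset (Set.subset_univ _))
    (fun S' _ => Kset_measurable G S S')]
  rw [ENNReal.toReal_sum]
  · rfl
  · intro a _
    exact ne_top_of_le_ne_top (by norm_num) (Kset_vol_le_one G S a)

lemma Kk_sum (S : Finset V) : ∑ S', Kk G S S' = 1 := by
  rw [Kk_sum_aux]
  have : (⋃ S' ∈ (Finset.univ : Finset (Finset V)), Kset G S S') = Set.Icc (0:ℝ) 1 := by
    ext u
    rw [Set.mem_iUnion₂]
    constructor
    · rintro ⟨S', -, hu⟩; exact hu.1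
    · intro h; exact ⟨esStep G S u, Finset.mem_univ _, h, rfl⟩
  rw [this]
  simp [Real.volume_Icc]

lemma Kk_sum_indicator (S : Finset V) (z : V) :
    ∑ S', Kk G S S' * (if z ∈ S' then 1 else 0) = pset G z S := by
  have h1 : ∑ S', Kk G S S' * (if z ∈ S' then 1 else 0)
      = ∑ S' ∈ Finset.univ.filter (fun S' => z ∈ S'), Kk G S S' := by
    rw [Finset.sum_filter]
    exact Finset.sum_congr rfl fun S' _ => by split_ifs <;> simp
  rw [h1, Kk_sum_aux]
  have h2 : (⋃ S' ∈ Finset.univ.filter (fun S' => z ∈ S'), Kset G S S')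
      = Set.Icc (0:ℝ) 1 ∩ Set.Iic (pset G z S) := by
    ext u
    rw [Set.mem_iUnion₂]
    constructor
    · rintro ⟨S', hmem, hu, heq⟩
      refine ⟨hu, ?_⟩
      have hz := (Finset.mem_filter.mp hmem).2
      rw [← heq] at hz
      exact (mem_esStep G).mp hz
    · rintro ⟨h1, h2⟩
      exact ⟨esStep G S u,
        Finset.mem_filter.mpr ⟨Finset.mem_univ _, (mem_esStep G).mpr h2⟩, ⟨h1, rfl⟩⟩
  rw [h2]
  have h3 : Set.Icc (0:ℝ) 1 ∩ Set.Iic (pset G z S) = Set.Icc (0:ℝ) (pset G z S) := by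
    ext u
    simp only [Set.mem_inter_iff, Set.mem_Icc, Set.mem_Iic]
    constructor
    · rintro ⟨⟨h0, _⟩, h2⟩; exact ⟨h0, h2⟩
    · rintro ⟨h0, h2⟩; exact ⟨⟨h0, le_trans h2 (pset_le_one G z S)⟩, h2⟩
  rw [h3, Real.volume_Icc, ENNReal.toReal_ofReal]
  · simp
  · simp [pset_nonneg]

lemma Kk_eq_zero {S S' : Finset V} {z : V} (hz : z ∈ S') (hp : pset G z S = 0) :
    Kk G S S' = 0 := by
  have h := Kk_sum_indicator G S z
  rw [hp] at h
  have hterm : ∀ S'' ∈ (Finset.univ : Finset (Finset V)),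
      0 ≤ Kk G S S'' * (if z ∈ S'' then 1 else 0) := by
    intro S'' _
    apply mul_nonneg (Kk_nonneg G S S'')
    split_ifs <;> norm_num
  have := (Finset.sum_eq_zero_iff_of_nonneg hterm).mp h S' (Finset.mem_univ _)
  rw [if_pos hz, mul_one] at this
  exact this

lemma sum_vol_Kk (S : Finset V) : ∑ S', vol G S' * Kk G S S' = vol G S := by
  have h1 : ∀ S' : Finset V, vol G S' * Kk G S S'
      = ∑ y, (G.degree y : ℝ) * (Kk G S S' * (if y ∈ S' then 1 else 0)) := by
    intro S'
    have hy : ∀ y, (G.degree y : ℝ) * (Kk G S S' * (if y ∈ S' then 1 else 0))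
        = if y ∈ S' then (G.degree y : ℝ) * Kk G S S' else 0 := by
      intro y; split_ifs <;> ring
    simp_rw [hy]
    rw [Finset.sum_ite_mem, Finset.univ_inter, vol, Finset.sum_mul]
  simp_rw [h1]
  rw [Finset.sum_comm]
  have h2 : ∀ y : V, ∑ S', (G.degree y : ℝ) * (Kk G S S' * (if y ∈ S' then 1 else 0))
      = (G.degree y : ℝ) * pset G y S := by
    intro y
    rw [← Finset.mul_sum, Kk_sum_indicator]
  rw [Finset.sum_congr rfl (fun y _ => h2 y)]
  have h3 : ∀ y : V, (G.degree y:ℝ) * pset G y S = ∑ z ∈ S, (G.degree y:ℝ) * walkP G y z := by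
    intro y; rw [pset, Finset.mul_sum]
  rw [Finset.sum_congr rfl (fun y _ => h3 y), Finset.sum_comm]
  have h4 : ∀ z ∈ S, ∑ y, (G.degree y:ℝ) * walkP G y z = (G.degree z : ℝ) := by
    intro z _
    rw [sum_deg_walkP G Finset.univ z, pset]
    exact deg_mul_rowsum G z
  rw [Finset.sum_congr rfl h4, vol]

end KK
section GPATH

variable {α : Type*} [Fintype α]

def Gpath (κ : α → α → ℝ) (a₀ : α) (n : ℕ) (f : (Fin (n+1) → α) → ℝ) : ℝ :=
  ∑ w : Fin (n+1) → α,
    if w 0 = a₀ then (∏ j : Fin n, κ (w j.castSucc) (w j.succ)) * f w else 0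

lemma Gpath_zero (κ : α → α → ℝ) (a₀ : α) (f : (Fin 1 → α) → ℝ) :
    Gpath κ a₀ 0 f = f (fun _ => a₀) := by
  rw [Gpath, Finset.sum_eq_single (fun _ => a₀ : Fin 1 → α)]
  · simp
  · intro w _ hw
    rw [if_neg]
    intro h0
    apply hw; funext i
    have hi : i = 0 := Subsingleton.elim i 0
    rw [hi, h0]
  · intro h; exact absurd (Finset.mem_univ _) h

lemma Gpath_succ (κ : α → α → ℝ) (a₀ : α) (n : ℕ) (f : (Fin (n+2) → α) → ℝ) :
    Gpath κ a₀ (n+1) f = ∑ b, κ a₀ b * Gpath κ b n (fun w => f (Fin.cons a₀ w)) := by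
  have key : ∀ (a : α) (u : Fin (n+1) → α),
      (∏ j : Fin (n+1), κ ((Fin.cons a u : Fin (n+2) → α) (Fin.castSucc j))
        ((Fin.cons a u : Fin (n+2) → α) j.succ))
      = κ a (u 0) * ∏ j : Fin n, κ (u j.castSucc) (u j.succ) := by
    intro a u
    rw [Fin.prod_univ_succ]
    congr 1
  have step : ∀ a : α,
      (∑ u : Fin (n+1) → α, if (Fin.cons a u : Fin (n+2) → α) 0 = a₀ then
        (∏ j : Fin (n+1), κ ((Fin.cons a u : Fin (n+2) → α) (Fin.castSucc j))
          ((Fin.cons a u : Fin (n+2) → α) j.succ))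
          * f (Fin.cons a u) else 0)
      = if a = a₀ then
          (∑ u : Fin (n+1) → α,
            κ a (u 0) * ((∏ j : Fin n, κ (u j.castSucc) (u j.succ)) * f (Fin.cons a u)))
        else 0 := by
    intro a
    by_cases ha : a = a₀
    · rw [if_pos ha]
      apply Finset.sum_congr rfl
      intro u _
      rw [if_pos (by rw [Fin.cons_zero]; exact ha), key]
      ring
    · rw [if_neg ha]
      apply Finset.sum_eq_zero
      intro u _
      rw [if_neg (by rw [Fin.cons_zero]; exact ha)]
  calc Gpath κ a₀ (n+1) f
      = ∑ p : α × (Fin (n+1) → α),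
          (if (Fin.cons p.1 p.2 : Fin (n+2) → α) 0 = a₀ then
            (∏ j : Fin (n+1), κ ((Fin.cons p.1 p.2 : Fin (n+2) → α) (Fin.castSucc j))
              ((Fin.cons p.1 p.2 : Fin (n+2) → α) j.succ))
              * f (Fin.cons p.1 p.2) else 0) := by
        rw [Gpath]
        exact ((Fin.consEquiv (fun _ : Fin (n+2) => α)).sum_comp
          (fun w : Fin (n+2) → α => if w 0 = a₀ then
            (∏ j : Fin (n+1), κ (w (Fin.castSucc j)) (w j.succ)) * f w else 0)).symm
    _ = ∑ a : α, ∑ u : Fin (n+1) → α,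
          (if (Fin.cons a u : Fin (n+2) → α) 0 = a₀ then
            (∏ j : Fin (n+1), κ ((Fin.cons a u : Fin (n+2) → α) (Fin.castSucc j))
              ((Fin.cons a u : Fin (n+2) → α) j.succ))
              * f (Fin.cons a u) else 0) := Fintype.sum_prod_type _
    _ = ∑ a : α, if a = a₀ then
          (∑ u : Fin (n+1) → α,
            κ a (u 0) * ((∏ j : Fin n, κ (u j.castSucc) (u j.succ)) * f (Fin.cons a u)))
        else 0 := Finset.sum_congr rfl fun a _ => step a
    _ = ∑ u : Fin (n+1) → α,
          κ a₀ (u 0) * ((∏ j : Fin n, κ (u j.castSucc) (u j.succ)) * f (Fin.cons a₀ u)) := by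
        rw [Finset.sum_ite_eq' Finset.univ a₀, if_pos (Finset.mem_univ _)]
    _ = ∑ b, κ a₀ b * Gpath κ b n (fun w => f (Fin.cons a₀ w)) := by
        have split : ∀ u : Fin (n+1) → α,
            κ a₀ (u 0) * ((∏ j : Fin n, κ (u j.castSucc) (u j.succ)) * f (Fin.cons a₀ u))
            = ∑ b, if u 0 = b then
                κ a₀ b * ((∏ j : Fin n, κ (u j.castSucc) (u j.succ)) * f (Fin.cons a₀ u))
              else 0 := by
          intro u
          rw [Finset.sum_ite_eq Finset.univ (u 0), if_pos (Finset.mem_univ _)]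
        rw [Finset.sum_congr rfl (fun u _ => split u), Finset.sum_comm]
        apply Finset.sum_congr rfl
        intro b _
        rw [Gpath, Finset.mul_sum]
        apply Finset.sum_congr rfl
        intro u _
        by_cases hb : u 0 = b
        · rw [if_pos hb, if_pos hb]
        · rw [if_neg hb, if_neg hb, mul_zero]

lemma Gpath_nonneg (κ : α → α → ℝ) (hk : ∀ a b, 0 ≤ κ a b) (a₀ : α) (n : ℕ)
    (f : (Fin (n+1) → α) → ℝ) (hf : ∀ w, 0 ≤ f w) : 0 ≤ Gpath κ a₀ n f := by
  apply Finset.sum_nonneg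
  intro w _
  split_ifs
  · exact mul_nonneg (Finset.prod_nonneg fun j _ => hk _ _) (hf w)
  · exact le_refl 0

lemma Gpath_mono (κ : α → α → ℝ) (hk : ∀ a b, 0 ≤ κ a b) (a₀ : α) (n : ℕ)
    (f g : (Fin (n+1) → α) → ℝ) (hfg : ∀ w, f w ≤ g w) :
    Gpath κ a₀ n f ≤ Gpath κ a₀ n g := by
  apply Finset.sum_le_sum
  intro w _
  split_ifs
  · exact mul_le_mul_of_nonneg_left (hfg w) (Finset.prod_nonneg fun j _ => hk _ _)
  · exact le_refl 0

end GPATH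
section MAIN

variable {V : Type*} [Fintype V] [DecidableEq V]
variable (G : SimpleGraph V) [DecidableRel G.Adj]

lemma exists_cons_iff {β : Type*} (n : ℕ) (a : β) (v : Fin (n+1) → β) (P : β → Prop) :
    (∃ j : Fin (n+2), P ((Fin.cons a v : Fin (n+2) → β) j)) ↔ P a ∨ ∃ j : Fin (n+1), P (v j) := by
  constructor
  · rintro ⟨j, hj⟩
    rcases Fin.eq_zero_or_eq_succ j with h0 | ⟨i, rfl⟩
    · subst h0; rw [Fin.cons_zero] at hj; exact Or.inl hj
    · rw [Fin.cons_succ] at hj; exact Or.inr ⟨i, hj⟩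
  · rintro (h | ⟨j, hj⟩)
    · exact ⟨0, by rwa [Fin.cons_zero]⟩
    · exact ⟨j.succ, by rwa [Fin.cons_succ]⟩

lemma Khat_nonneg (S S' : Finset V) : 0 ≤ Khat G S S' :=
  mul_nonneg (div_nonneg (vol_nonneg G S') (vol_nonneg G S)) (Kk_nonneg G S S')

lemma Khat_sum_le_one (S : Finset V) : ∑ S', Khat G S S' ≤ 1 := by
  have h : ∀ S' : Finset V, Khat G S S' = (vol G S' * Kk G S S') / vol G S := by
    intro S'; rw [Khat, div_mul_eq_mul_div]
  rw [Finset.sum_congr rfl (fun S' _ => h S'), ← Finset.sum_div, sum_vol_Kk]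
  by_cases hv : vol G S = 0
  · rw [hv, div_zero]; norm_num
  · rw [div_self hv]

def jstep (y z : V) (S S' : Finset V) : ℝ :=
  walkP G y z * Kk G S S' * (if z ∈ S' then 1 else 0) / pset G z S

lemma jstep_nonneg (y z : V) (S S' : Finset V) : 0 ≤ jstep G y z S S' := by
  apply div_nonneg _ (pset_nonneg G z S)
  apply mul_nonneg (mul_nonneg (walkP_nonneg G y z) (Kk_nonneg G S S'))
  split_ifs <;> norm_num

lemma walkP_pos_deg {y z : V} (h : walkP G y z ≠ 0) (hy : 0 < G.degree y) :
    0 < G.degree z := by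
  by_cases hyz : y = z
  · exact hyz ▸ hy
  · by_cases ha : G.Adj y z
    · rw [← SimpleGraph.card_neighborFinset_eq_degree]
      exact Finset.card_pos.mpr ⟨y, (SimpleGraph.mem_neighborFinset G z y).mpr ha.symm⟩
    · exact absurd (by simp [walkP, hyz, ha]) h

lemma pset_pos_of_walkP {y z : V} {S : Finset V} (hyS : y ∈ S) (h : walkP G y z ≠ 0) :
    0 < pset G z S := by
  have hzy : 0 < walkP G z y := by
    by_cases hyz : y = z
    · subst hyz; simp [walkP]
    · by_cases ha : G.Adj y z
      · have hz : 0 < G.degree z := by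
          rw [← SimpleGraph.card_neighborFinset_eq_degree]
          exact Finset.card_pos.mpr ⟨y, (SimpleGraph.mem_neighborFinset G z y).mpr ha.symm⟩
        have : walkP G z y = 1 / (2 * (G.degree z : ℝ)) := by
          have h1 : ¬ (z = y) := fun hh => hyz hh.symm
          simp [walkP, h1, ha.symm]
        rw [this]; positivity
      · exact absurd (by simp [walkP, hyz, ha]) h
  calc (0:ℝ) < walkP G z y := hzy
    _ ≤ pset G z S := Finset.single_le_sum (fun w _ => walkP_nonneg G z w) hyS

lemma jstep_sum_inner (y z : V) (S : Finset V) :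
    ∑ S', jstep G y z S S' = walkP G y z * (pset G z S / pset G z S) := by
  unfold jstep
  rw [← Finset.sum_div]
  have : ∑ S', walkP G y z * Kk G S S' * (if z ∈ S' then 1 else 0)
      = walkP G y z * pset G z S := by
    rw [← Kk_sum_indicator G S z, Finset.mul_sum]
    exact Finset.sum_congr rfl fun S' _ => by ring
  rw [this, mul_div_assoc]

lemma jstep_sum_le (y z : V) (S : Finset V) :
    ∑ S', jstep G y z S S' ≤ walkP G y z := by
  rw [jstep_sum_inner]
  by_cases hp : pset G z S = 0
  · rw [hp, div_zero, mul_zero]; exact walkP_nonneg G y z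
  · rw [div_self hp, mul_one]

lemma jstep_sum (y : V) (S : Finset V) (hyS : y ∈ S) (hy : 0 < G.degree y) :
    ∑ z, ∑ S', jstep G y z S S' = 1 := by
  have h : ∀ z, ∑ S', jstep G y z S S' = walkP G y z := by
    intro z
    rw [jstep_sum_inner]
    by_cases hw : walkP G y z = 0
    · rw [hw, zero_mul]
    · rw [div_self (ne_of_gt (pset_pos_of_walkP G hyS hw)), mul_one]
  rw [Finset.sum_congr rfl (fun z _ => h z)]
  exact walkP_rowsum G hy

def Bd (A : Finset V) (c : ℝ) (S : Finset V) : Prop := c < vol G (S \ A) / vol G S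

def NumF (A : Finset V) (c : ℝ) : ℕ → Finset V → ℝ
  | 0, S => if Bd G A c S then 1 else 0
  | n+1, S => if Bd G A c S then 1 else ∑ S', Khat G S S' * NumF A c n S'

def RatF (A : Finset V) (c : ℝ) : ℕ → Finset V → ℝ
  | 0, S => if Bd G A c S then vol G (S \ A) / vol G S else 0
  | n+1, S => if Bd G A c S then vol G (S \ A) / vol G S
      else ∑ S', Khat G S S' * RatF A c n S'

def JointF (A : Finset V) (c : ℝ) : ℕ → V → Finset V → ℝ
  | 0, y, S => if Bd G A c S then (if y ∈ A then 0 else 1) else 0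
  | n+1, y, S => if Bd G A c S then (if y ∈ A then 0 else 1)
      else ∑ z, ∑ S', jstep G y z S S' * JointF A c n z S'

def EscS (A : Finset V) (n : ℕ) (y : V) : ℝ :=
  Gpath (walkP G) y n (fun v => if ∃ j, v j ∉ A then 1 else 0)

lemma NumF_nonneg (A : Finset V) (c : ℝ) : ∀ n S, 0 ≤ NumF G A c n S := by
  intro n
  induction n with
  | zero => intro S; rw [NumF]; split_ifs <;> norm_num
  | succ n ih =>
    intro S; rw [NumF]
    split_ifs
    · norm_num
    · exact Finset.sum_nonneg fun S' _ => mul_nonneg (Khat_nonneg G S S') (ih S')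

end MAIN
section MAIN2

variable {V : Type*} [Fintype V] [DecidableEq V]
variable (G : SimpleGraph V) [DecidableRel G.Adj]

lemma div_helper1 (a b k d : ℝ) (ha : a ≠ 0) : (a / b * k) * (d / a) = d * k / b := by
  rcases eq_or_ne b 0 with hb | hb
  · simp [hb]
  · field_simp

lemma div_helper2 (p b k d : ℝ) (hp : p ≠ 0) : d * p * k / (b * p) = d * k / b := by
  rcases eq_or_ne b 0 with hb | hb
  · simp [hb]
  · field_simp

lemma Wmass_le_one : ∀ (n : ℕ) (y : V), Gpath (walkP G) y n (fun _ => 1) ≤ 1 := by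
  intro n
  induction n with
  | zero => intro y; rw [Gpath_zero]
  | succ n ih =>
    intro y
    rw [Gpath_succ]
    calc ∑ z, walkP G y z * Gpath (walkP G) z n (fun _ => 1)
        ≤ ∑ z, walkP G y z * 1 :=
          Finset.sum_le_sum fun z _ =>
            mul_le_mul_of_nonneg_left (ih z) (walkP_nonneg G y z)
      _ ≤ 1 := by
          rw [Finset.sum_congr rfl (fun z _ => mul_one (walkP G y z))]
          exact walkP_rowsum_le G y

lemma Wmass_eq_one : ∀ (n : ℕ) {y : V}, 0 < G.degree y →
    Gpath (walkP G) y n (fun _ => 1) = 1 := by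
  intro n
  induction n with
  | zero => intro y _; rw [Gpath_zero]
  | succ n ih =>
    intro y hy
    rw [Gpath_succ]
    have h : ∀ z : V, walkP G y z * Gpath (walkP G) z n (fun _ => 1) = walkP G y z := by
      intro z
      by_cases hw : walkP G y z = 0
      · rw [hw, zero_mul]
      · rw [ih (walkP_pos_deg G hw hy), mul_one]
    rw [Finset.sum_congr rfl (fun z _ => h z)]
    exact walkP_rowsum G hy

lemma EscS_nonneg (A : Finset V) (n : ℕ) (y : V) : 0 ≤ EscS G A n y := by
  apply Gpath_nonneg _ (walkP_nonneg G) _ _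
  intro w; split_ifs <;> norm_num

lemma EscS_le_one (A : Finset V) (n : ℕ) (y : V) : EscS G A n y ≤ 1 := by
  refine le_trans (Gpath_mono _ (walkP_nonneg G) _ _ _ (fun _ => 1) ?_) (Wmass_le_one G n y)
  intro w; split_ifs <;> norm_num

lemma Gpath_congr_start {α : Type*} [Fintype α] (κ : α → α → ℝ) (a₀ : α) (n : ℕ)
    (f g : (Fin (n+1) → α) → ℝ) (h : ∀ w, w 0 = a₀ → f w = g w) :
    Gpath κ a₀ n f = Gpath κ a₀ n g := by
  apply Finset.sum_congr rfl
  intro w _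
  by_cases h0 : w 0 = a₀
  · rw [if_pos h0, if_pos h0, h w h0]
  · rw [if_neg h0, if_neg h0]

lemma EscS_eq_one (A : Finset V) {y : V} (hy : 0 < G.degree y) (hyA : y ∉ A) (n : ℕ) :
    EscS G A n y = 1 := by
  rw [EscS, Gpath_congr_start (walkP G) y n _ (fun _ => 1)
    (fun w hw => if_pos ⟨0, by rw [hw]; exact hyA⟩)]
  exact Wmass_eq_one G n hy

lemma EscS_succ_ge (A : Finset V) (n : ℕ) (y : V) :
    ∑ z, walkP G y z * EscS G A n z ≤ EscS G A (n+1) y := by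
  rw [EscS, Gpath_succ]
  apply Finset.sum_le_sum
  intro z _
  apply mul_le_mul_of_nonneg_left _ (walkP_nonneg G y z)
  rw [EscS]
  apply Gpath_mono _ (walkP_nonneg G)
  intro w
  by_cases h1 : ∃ j : Fin (n+1), w j ∉ A
  · rw [if_pos h1, if_pos ((exists_cons_iff n y w (· ∉ A)).mpr (Or.inr h1))]
  · rw [if_neg h1]
    split_ifs <;> norm_num

lemma JointF_le_EscS (A : Finset V) (c : ℝ) :
    ∀ (n : ℕ) (y : V) (S : Finset V), 0 < G.degree y →
      JointF G A c n y S ≤ EscS G A n y := by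
  intro n
  induction n with
  | zero =>
    intro y S hy
    rw [JointF]
    split_ifs with hB hA
    · exact EscS_nonneg G A 0 y
    · exact le_of_eq (EscS_eq_one G A hy hA 0).symm
    · exact EscS_nonneg G A 0 y
  | succ n ih =>
    intro y S hy
    rw [JointF]
    split_ifs with hB hA
    · exact EscS_nonneg G A (n+1) y
    · exact le_of_eq (EscS_eq_one G A hy hA (n+1)).symm
    · calc ∑ z, ∑ S', jstep G y z S S' * JointF G A c n z S'
          ≤ ∑ z, (∑ S', jstep G y z S S') * EscS G A n z := by
            apply Finset.sum_le_sum
            intro z _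
            rw [Finset.sum_mul]
            by_cases hw : walkP G y z = 0
            · apply Finset.sum_le_sum
              intro S' _
              have hj : jstep G y z S S' = 0 := by simp [jstep, hw]
              rw [hj, zero_mul, zero_mul]
            · apply Finset.sum_le_sum
              intro S' _
              exact mul_le_mul_of_nonneg_left (ih z S' (walkP_pos_deg G hw hy))
                (jstep_nonneg G y z S S')
        _ ≤ ∑ z, walkP G y z * EscS G A n z :=
            Finset.sum_le_sum fun z _ =>
              mul_le_mul_of_nonneg_right (jstep_sum_le G y z S) (EscS_nonneg G A n z)
        _ ≤ EscS G A (n+1) y := EscS_succ_ge G A n y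

lemma ratio_expand (A S : Finset V) : vol G (S \ A) / vol G S
    = ∑ y, (if y ∈ S then (G.degree y : ℝ) else 0) / vol G S * (if y ∈ A then 0 else 1) := by
  have h1 : ∀ y : V, (if y ∈ S then (G.degree y:ℝ) else 0) / vol G S * (if y ∈ A then 0 else 1)
      = (if y ∈ S \ A then (G.degree y:ℝ) else 0) / vol G S := by
    intro y
    by_cases h2 : y ∈ S <;> by_cases h3 : y ∈ A <;>
      simp [Finset.mem_sdiff, h2, h3]
  rw [Finset.sum_congr rfl (fun y _ => h1 y), ← Finset.sum_div, Finset.sum_ite_mem,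
    Finset.univ_inter, vol]

lemma keystep (A : Finset V) (S : Finset V) (z : V) (S' : Finset V) :
    Khat G S S' * ((if z ∈ S' then (G.degree z : ℝ) else 0) / vol G S')
      = (∑ y, (if y ∈ S then (G.degree y : ℝ) else 0) * walkP G y z)
        * (Kk G S S' * (if z ∈ S' then 1 else 0)) / (vol G S * pset G z S) := by
  have hsum : ∑ y, (if y ∈ S then (G.degree y : ℝ) else 0) * walkP G y z
      = (G.degree z : ℝ) * pset G z S := by
    have : ∀ y : V, (if y ∈ S then (G.degree y : ℝ) else 0) * walkP G y z
        = if y ∈ S then (G.degree y : ℝ) * walkP G y z else 0 := by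
      intro y; split_ifs <;> simp
    rw [Finset.sum_congr rfl (fun y _ => this y), Finset.sum_ite_mem, Finset.univ_inter]
    exact sum_deg_walkP G S z
  rw [hsum]
  by_cases hz : z ∈ S'
  · rw [if_pos hz, if_pos hz, mul_one]
    by_cases hp : pset G z S = 0
    · simp [Khat, Kk_eq_zero G hz hp, hp]
    · by_cases hv : vol G S' = 0
      · have hd : (G.degree z : ℝ) = 0 := by
          have h1 := degree_le_vol G hz
          have h2 : (0:ℝ) ≤ (G.degree z : ℝ) := by positivity
          linarith [hv ▸ h1]
        rw [hd]
        simp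
      · rw [Khat, div_helper1 _ _ _ _ hv, div_helper2 _ _ _ _ hp]
  · rw [if_neg hz, if_neg hz]
    simp

lemma RatF_eq (A : Finset V) (c : ℝ) :
    ∀ (n : ℕ) (S : Finset V), RatF G A c n S
      = ∑ y, (if y ∈ S then (G.degree y : ℝ) else 0) / vol G S * JointF G A c n y S := by
  intro n
  induction n with
  | zero =>
    intro S
    by_cases hB : Bd G A c S
    · rw [show RatF G A c 0 S = vol G (S \ A) / vol G S from by rw [RatF, if_pos hB],
        ratio_expand G A S]
      apply Finset.sum_congr rfl
      intro y _
      rw [show JointF G A c 0 y S = (if y ∈ A then 0 else 1) from by rw [JointF, if_pos hB]]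
    · rw [show RatF G A c 0 S = 0 from by rw [RatF, if_neg hB]]
      symm
      apply Finset.sum_eq_zero
      intro y _
      rw [show JointF G A c 0 y S = 0 from by rw [JointF, if_neg hB], mul_zero]
  | succ n ih =>
    intro S
    by_cases hB : Bd G A c S
    · rw [show RatF G A c (n+1) S = vol G (S \ A) / vol G S from by rw [RatF, if_pos hB],
        ratio_expand G A S]
      apply Finset.sum_congr rfl
      intro y _
      rw [show JointF G A c (n+1) y S = (if y ∈ A then 0 else 1) from by
        rw [JointF, if_pos hB]]
    · rw [show RatF G A c (n+1) S = ∑ S', Khat G S S' * RatF G A c n S' from by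
        rw [RatF, if_neg hB]]
      have step1 : ∀ S' : Finset V, Khat G S S' * RatF G A c n S'
          = ∑ z, Khat G S S' * ((if z ∈ S' then (G.degree z : ℝ) else 0) / vol G S')
              * JointF G A c n z S' := by
        intro S'
        rw [ih S', Finset.mul_sum]
        exact Finset.sum_congr rfl fun z _ => by ring
      have step2 : ∀ y : V, (if y ∈ S then (G.degree y : ℝ) else 0) / vol G S
            * JointF G A c (n+1) y S
          = ∑ z, ∑ S', (if y ∈ S then (G.degree y : ℝ) else 0) / vol G S
              * (jstep G y z S S' * JointF G A c n z S') := by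
        intro y
        rw [show JointF G A c (n+1) y S
            = ∑ z, ∑ S', jstep G y z S S' * JointF G A c n z S' from by
          rw [JointF, if_neg hB], Finset.mul_sum]
        exact Finset.sum_congr rfl fun z _ => by rw [Finset.mul_sum]
      have perterm : ∀ (z : V) (S' : Finset V),
          Khat G S S' * ((if z ∈ S' then (G.degree z:ℝ) else 0) / vol G S')
              * JointF G A c n z S'
          = ∑ y, (if y ∈ S then (G.degree y:ℝ) else 0) / vol G S
              * (jstep G y z S S' * JointF G A c n z S') := by
        intro z S'
        have e1 : ∀ y : V, (if y ∈ S then (G.degree y:ℝ) else 0) / vol G S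
              * (jstep G y z S S' * JointF G A c n z S')
            = ((if y ∈ S then (G.degree y:ℝ) else 0) * walkP G y z
                * (Kk G S S' * (if z ∈ S' then 1 else 0)) / (vol G S * pset G z S))
              * JointF G A c n z S' := by
          intro y
          rw [jstep]
          simp only [div_eq_mul_inv, mul_inv]
          ring
        rw [Finset.sum_congr rfl (fun y _ => e1 y), ← Finset.sum_mul, ← Finset.sum_div,
          ← Finset.sum_mul, ← keystep G A S z S']
      calc ∑ S', Khat G S S' * RatF G A c n S'
          = ∑ S', ∑ z, Khat G S S' * ((if z ∈ S' then (G.degree z:ℝ) else 0) / vol G S')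
              * JointF G A c n z S' := Finset.sum_congr rfl fun S' _ => step1 S'
        _ = ∑ z, ∑ S', Khat G S S' * ((if z ∈ S' then (G.degree z:ℝ) else 0) / vol G S')
              * JointF G A c n z S' := Finset.sum_comm
        _ = ∑ z, ∑ S', ∑ y, (if y ∈ S then (G.degree y:ℝ) else 0) / vol G S
              * (jstep G y z S S' * JointF G A c n z S') :=
            Finset.sum_congr rfl fun z _ => Finset.sum_congr rfl fun S' _ => perterm z S'
        _ = ∑ z, ∑ y, ∑ S', (if y ∈ S then (G.degree y:ℝ) else 0) / vol G S
              * (jstep G y z S S' * JointF G A c n z S') :=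
            Finset.sum_congr rfl fun z _ => Finset.sum_comm
        _ = ∑ y, ∑ z, ∑ S', (if y ∈ S then (G.degree y:ℝ) else 0) / vol G S
              * (jstep G y z S S' * JointF G A c n z S') := Finset.sum_comm
        _ = ∑ y, (if y ∈ S then (G.degree y : ℝ) else 0) / vol G S
              * JointF G A c (n+1) y S :=
            Finset.sum_congr rfl fun y _ => (step2 y).symm

end MAIN2

section MAIN3

variable {V : Type*} [Fintype V] [DecidableEq V]
variable (G : SimpleGraph V) [DecidableRel G.Adj]

lemma Num_le_Rat (A : Finset V) (c : ℝ) :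
    ∀ (n : ℕ) (S : Finset V), c * NumF G A c n S ≤ RatF G A c n S
      ∧ (0 < NumF G A c n S → c * NumF G A c n S < RatF G A c n S) := by
  intro n
  induction n with
  | zero =>
    intro S
    by_cases hB : Bd G A c S
    · rw [show NumF G A c 0 S = 1 from by rw [NumF, if_pos hB],
        show RatF G A c 0 S = vol G (S \ A) / vol G S from by rw [RatF, if_pos hB], mul_one]
      exact ⟨le_of_lt hB, fun _ => hB⟩
    · rw [show NumF G A c 0 S = 0 from by rw [NumF, if_neg hB],
        show RatF G A c 0 S = 0 from by rw [RatF, if_neg hB], mul_zero]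
      exact ⟨le_refl 0, fun h => absurd h (lt_irrefl 0)⟩
  | succ n ih =>
    intro S
    by_cases hB : Bd G A c S
    · rw [show NumF G A c (n+1) S = 1 from by rw [NumF, if_pos hB],
        show RatF G A c (n+1) S = vol G (S \ A) / vol G S from by rw [RatF, if_pos hB], mul_one]
      exact ⟨le_of_lt hB, fun _ => hB⟩
    · rw [show NumF G A c (n+1) S = ∑ S', Khat G S S' * NumF G A c n S' from by
        rw [NumF, if_neg hB],
        show RatF G A c (n+1) S = ∑ S', Khat G S S' * RatF G A c n S' from by
        rw [RatF, if_neg hB], Finset.mul_sum]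
    
      have hle : ∀ S' ∈ (Finset.univ : Finset (Finset V)),
          c * (Khat G S S' * NumF G A c n S') ≤ Khat G S S' * RatF G A c n S' := by
        intro S' _
        rw [show c * (Khat G S S' * NumF G A c n S')
            = Khat G S S' * (c * NumF G A c n S') from by ring]
        exact mul_le_mul_of_nonneg_left (ih S').1 (Khat_nonneg G S S')
      constructor
      · exact Finset.sum_le_sum hle
      · intro hpos
        have hex : ∃ S' : Finset V, 0 < Khat G S S' * NumF G A c n S' := by
          by_contra hno
          push_neg at hno
          have := Finset.sum_nonpos (fun S' (_ : S' ∈ Finset.univ) => hno S')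
          linarith
        obtain ⟨S₀, hS₀⟩ := hex
        have hk : 0 < Khat G S S₀ := by
          rcases (Khat_nonneg G S S₀).lt_or_eq with h | h
          · exact h
          · rw [← h, zero_mul] at hS₀; exact absurd hS₀ (lt_irrefl 0)
        have hn : 0 < NumF G A c n S₀ := by
          rcases (NumF_nonneg G A c n S₀).lt_or_eq with h | h
          · exact h
          · rw [← h, mul_zero] at hS₀; exact absurd hS₀ (lt_irrefl 0)
        apply Finset.sum_lt_sum hle
        refine ⟨S₀, Finset.mem_univ _, ?_⟩
        rw [show c * (Khat G S S₀ * NumF G A c n S₀)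
            = Khat G S S₀ * (c * NumF G A c n S₀) from by ring]
        exact mul_lt_mul_of_pos_left ((ih S₀).2 hn) hk

lemma Bd_false_of_vol_zero (A : Finset V) {c : ℝ} (hc : 0 ≤ c) {S : Finset V}
    (hv : vol G S = 0) : ¬ Bd G A c S := by
  rw [Bd, hv, div_zero]
  exact fun h => absurd (lt_of_le_of_lt hc h) (lt_irrefl 0)

lemma Num_deg_zero (A : Finset V) {c : ℝ} (hc : 0 ≤ c) {x : V} (hd : G.degree x = 0) :
    ∀ n, NumF G A c n {x} = 0 := by
  have hv : vol G {x} = 0 := by rw [vol, Finset.sum_singleton, hd]; norm_num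
  have hB := Bd_false_of_vol_zero G A hc hv
  intro n
  cases n with
  | zero => rw [NumF, if_neg hB]
  | succ n =>
    rw [NumF, if_neg hB]
    apply Finset.sum_eq_zero
    intro S' _
    rw [Khat, hv, div_zero, zero_mul, zero_mul]

lemma KhatMass_le_one : ∀ (n : ℕ) (S₀ : Finset V), Gpath (Khat G) S₀ n (fun _ => 1) ≤ 1 := by
  intro n
  induction n with
  | zero => intro S₀; rw [Gpath_zero]
  | succ n ih =>
    intro S₀
    rw [Gpath_succ]
    calc ∑ S', Khat G S₀ S' * Gpath (Khat G) S' n (fun _ => 1)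
        ≤ ∑ S', Khat G S₀ S' * 1 :=
          Finset.sum_le_sum fun S' _ =>
            mul_le_mul_of_nonneg_left (ih S') (Khat_nonneg G S₀ S')
      _ ≤ 1 := by
          rw [Finset.sum_congr rfl (fun S' _ => mul_one (Khat G S₀ S'))]
          exact Khat_sum_le_one G S₀

lemma Epath_le_Num (A : Finset V) (c : ℝ) :
    ∀ (n : ℕ) (S₀ : Finset V),
      Gpath (Khat G) S₀ n (fun w => if ∃ t, Bd G A c (w t) then 1 else 0)
        ≤ NumF G A c n S₀ := by
  intro n
  induction n with
  | zero =>
    intro S₀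
    rw [Gpath_zero, NumF]
    by_cases hB : Bd G A c S₀
    · rw [if_pos ⟨0, hB⟩, if_pos hB]
    · rw [if_neg (by rintro ⟨t, ht⟩; exact hB ht), if_neg hB]
  | succ n ih =>
    intro S₀
    by_cases hB : Bd G A c S₀
    · rw [show NumF G A c (n+1) S₀ = 1 from by rw [NumF, if_pos hB]]
      refine le_trans (Gpath_mono _ (Khat_nonneg G) _ _ _ (fun _ => 1) ?_)
        (KhatMass_le_one G (n+1) S₀)
      intro w; split_ifs <;> norm_num
    · rw [show NumF G A c (n+1) S₀ = ∑ S', Khat G S₀ S' * NumF G A c n S' from by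
        rw [NumF, if_neg hB], Gpath_succ]
      apply Finset.sum_le_sum
      intro S' _
      apply mul_le_mul_of_nonneg_left _ (Khat_nonneg G S₀ S')
      have hfe : (fun w : Fin (n+1) → Finset V =>
            if ∃ t : Fin (n+2), Bd G A c ((Fin.cons S₀ w : Fin (n+2) → Finset V) t)
            then (1:ℝ) else 0)
          = (fun w : Fin (n+1) → Finset V =>
            if ∃ t : Fin (n+1), Bd G A c (w t) then (1:ℝ) else 0) := by
        funext w
        by_cases hE : ∃ t : Fin (n+1), Bd G A c (w t)
        · rw [if_pos hE,
            if_pos ((exists_cons_iff n S₀ w (Bd G A c)).mpr (Or.inr hE))]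
        · rw [if_neg hE, if_neg (by
            intro hcons
            rcases (exists_cons_iff n S₀ w (Bd G A c)).mp hcons with h | h
            · exact hB h
            · exact hE h)]
      exact le_trans (le_of_eq (congrArg (Gpath (Khat G) S' n) hfe)) (ih S')

lemma escProb_eq_EscS (x : V) (T : ℕ) (A : Finset V) :
    escProb G x T A = EscS G A T x := by
  rw [escProb, EscS, Gpath]
  apply Finset.sum_congr rfl
  intro v _
  by_cases h0 : v 0 = x
  · rw [if_pos h0]
    by_cases hC : ∃ j : Fin (T+1), v j ∉ A
    · rw [if_pos ⟨h0, hC⟩, if_pos hC, mul_one]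
    · rw [if_neg (fun hh => hC hh.2), if_neg hC, mul_zero]
  · rw [if_neg (fun hh => h0 hh.1), if_neg h0]

end MAIN3



end AUX

/-- Lemma 6: for any vertex `x`, set `A`, integer `T ≥ 0` and `λ > 0`, the
volume-biased evolving set process started from `{x}` satisfies
`P̂_x[max_{0 ≤ t ≤ T} μ(S_t \ A)/μ(S_t) > λ·esc(x,T,A)] < 1/λ`. -/
theorem statement13 (G : SimpleGraph V) [DecidableRel G.Adj]
    (x : V) (A : Finset V) (T : ℕ) (lam : ℝ) (hlam : 0 < lam) :
    (Epath (Khat G) {x} T fun w =>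
      if ∃ t : Fin (T+1), lam * escProb G x T A < vol G (w t \ A) / vol G (w t)
      then 1 else 0) < 1 / lam := by
  set e := escProb G x T A with he
  set c := lam * e with hcdef
  have hesc0 : 0 ≤ e := by
    rw [he, escProb]
    apply Finset.sum_nonneg
    intro v _
    split_ifs
    · exact Finset.prod_nonneg fun j _ => walkP_nonneg G _ _
    · exact le_refl 0
  have hc : 0 ≤ c := mul_nonneg hlam.le hesc0
  have hL : (Epath (Khat G) {x} T fun w =>
      if ∃ t : Fin (T+1), c < vol G (w t \ A) / vol G (w t) then 1 else 0)
      ≤ NumF G A c T {x} := by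
    have hEG : (Epath (Khat G) {x} T fun w =>
        if ∃ t : Fin (T+1), c < vol G (w t \ A) / vol G (w t) then (1:ℝ) else 0)
        = Gpath (Khat G) {x} T fun w => if ∃ t, Bd G A c (w t) then 1 else 0 := by
      simp only [Epath, Gpath, Bd]
      congr 1
      funext w
      congr
    rw [hEG]
    exact Epath_le_Num G A c T {x}
  rcases (NumF_nonneg G A c T {x}).lt_or_eq with hpos | hzero
  · -- 0 < N
    have hd : 0 < G.degree x := by
      by_contra hdeg
      have h0 : G.degree x = 0 := Nat.eq_zero_of_not_pos hdeg
      rw [Num_deg_zero G A hc h0 T] at hpos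
      exact absurd hpos (lt_irrefl 0)
    have hdx : ((G.degree x : ℝ)) ≠ 0 := by positivity
    have hvx : vol G {x} = (G.degree x : ℝ) := by rw [vol, Finset.sum_singleton]
    have hRat : RatF G A c T {x} = JointF G A c T x {x} := by
      rw [RatF_eq G A c T {x}]
      rw [Finset.sum_eq_single x]
      · rw [if_pos (Finset.mem_singleton_self x), hvx, div_self hdx, one_mul]
      · intro y _ hy
        rw [if_neg (by rw [Finset.mem_singleton]; exact hy), zero_div, zero_mul]
      · intro h; exact absurd (Finset.mem_univ x) h
    set N := NumF G A c T {x} with hN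
    have hchain : c * N < e := by
      calc c * N < RatF G A c T {x} := (Num_le_Rat G A c T {x}).2 hpos
        _ = JointF G A c T x {x} := hRat
        _ ≤ EscS G A T x := JointF_le_EscS G A c T x {x} hd
        _ = e := (escProb_eq_EscS G x T A).symm
    have hepos : 0 < e := by
      rcases hesc0.lt_or_eq with h | h
      · exact h
      · exfalso
        have h0 : c * N = 0 := by rw [hcdef, ← h]; ring
        rw [h0, ← h] at hchain
        exact lt_irrefl 0 hchain
    have hNlt : N < 1 / lam := by
      rw [lt_div_iff₀ hlam]
      have h1 : (lam * N) * e < 1 * e := by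
        rw [one_mul]
        calc (lam * N) * e = c * N := by ring
          _ < e := hchain
      have h2 : lam * N < 1 := lt_of_mul_lt_mul_right h1 hepos.le
      linarith
    exact lt_of_le_of_lt hL hNlt
  · rw [← hzero] at hL
    exact lt_of_le_of_lt hL (by positivity)

end
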